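/- For monotone f : {-1,1}^I → {-1,1} and a single bit x ∈ I with W ⊆ I∖{x}, the exact identity ∑_{S : x∈S, S∩W=∅} f̂(S)² = E[λ(x,W)²] holds, where λ(x,W) = P[x is pivotal | F_{W^c}]. -/
import Mathlib


open Finset

variable {I : Type*} [Fintype I] [DecidableEq I]

/-- Expectation with respect to the uniform probability measure on `{-1,1}^I ≅ (I → Bool)`. -/
noncomputable def expec (f : (I → Bool) → ℝ) : ℝ :=
  (∑ ω : I → Bool, f ω) / (Fintype.card (I → Bool) : ℝ)

/-- The value `±1` of a bit. -/
noncomputable def sgn (b : Bool) : ℝ := if b then 1 else -1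

/-- The Walsh function `χ_S(ω) = ∏_{i ∈ S} ω_i`. -/
noncomputable def chi (S : Finset I) (ω : I → Bool) : ℝ := ∏ i ∈ S, sgn (ω i)

/-- The Fourier coefficient `f̂(S) = E[f ⬝ χ_S]`. -/
noncomputable def fhat (f : (I → Bool) → ℝ) (S : Finset I) : ℝ :=
  expec (fun ω => f ω * chi S ω)

/-- The conditional expectation `E[g | F_A]` given the coordinates in `A`. -/
noncomputable def condE (g : (I → Bool) → ℝ) (A : Finset I) (ω : I → Bool) : ℝ :=
  expec (fun z => g (fun i => if i ∈ A then ω i else z i))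

open Classical in
/-- The indicator of the event that the bit `x` is pivotal for `f`. -/
noncomputable def pivIndBit (f : (I → Bool) → ℝ) (x : I) (ω : I → Bool) : ℝ :=
  if f (Function.update ω x (!ω x)) ≠ f ω then 1 else 0

set_option linter.unusedSectionVars false

lemma sgn_sq (b : Bool) : sgn b * sgn b = 1 := by cases b <;> simp [sgn]

lemma sgn_not (b : Bool) : sgn (!b) = -sgn b := by cases b <;> simp [sgn]

lemma cardN_pos : (0:ℝ) < (Fintype.card (I → Bool) : ℝ) := by
  exact_mod_cast Fintype.card_pos

/-- Key orthogonality-type identity. -/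
lemma sum_chi_mul (ω z : I → Bool) :
    ∑ S : Finset I, chi S ω * chi S z
      = if ω = z then (Fintype.card (I → Bool) : ℝ) else 0 := by
  have h1 : ∀ S : Finset I, chi S ω * chi S z = ∏ i ∈ S, (sgn (ω i) * sgn (z i)) := by
    intro S; simp [chi, Finset.prod_mul_distrib]
  have h2 : ∑ S : Finset I, chi S ω * chi S z
      = ∏ i : I, (sgn (ω i) * sgn (z i) + 1) := by
    rw [Fintype.prod_add]
    simp [h1]
  rw [h2]
  by_cases h : ω = z
  · subst h
    simp only [sgn_sq]
    rw [if_pos trivial, Fintype.card_fun]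
    norm_num
  · rw [if_neg h]
    obtain ⟨i, hi⟩ : ∃ i, ω i ≠ z i := by
      by_contra hc; push_neg at hc; exact h (funext hc)
    apply Finset.prod_eq_zero (Finset.mem_univ i)
    revert hi; cases ω i <;> cases z i <;> simp [sgn]

/-- Fourier inversion. -/
lemma expansion (g : (I → Bool) → ℝ) (ω : I → Bool) :
    ∑ S : Finset I, fhat g S * chi S ω = g ω := by
  have hN : (Fintype.card (I → Bool) : ℝ) ≠ 0 := ne_of_gt cardN_pos
  have : ∑ S : Finset I, fhat g S * chi S ω
      = (∑ z : I → Bool, g z * ∑ S : Finset I, chi S z * chi S ω)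
        / (Fintype.card (I → Bool) : ℝ) := by
    simp only [fhat, expec, Finset.mul_sum, Finset.sum_div]
    rw [Finset.sum_comm]
    refine Finset.sum_congr rfl fun z _ => ?_
    rw [Finset.sum_mul]
    exact Finset.sum_congr rfl fun S _ => by ring
  rw [this]
  have : ∀ z : I → Bool, g z * ∑ S : Finset I, chi S z * chi S ω
      = if z = ω then g z * (Fintype.card (I → Bool) : ℝ) else 0 := by
    intro z; rw [sum_chi_mul]; split <;> simp
  simp only [this]
  rw [Finset.sum_ite_eq' Finset.univ ω (fun z => g z * _)]
  simp [hN]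

/-- Parseval/Plancherel. -/
lemma parseval (g h : (I → Bool) → ℝ) :
    ∑ S : Finset I, fhat g S * fhat h S = expec (fun ω => g ω * h ω) := by
  have hh : ∀ S, fhat h S = ∑ ω : I → Bool, h ω * chi S ω / (Fintype.card (I → Bool) : ℝ) := by
    intro S; simp [fhat, expec, Finset.sum_div]
  have h1 : ∀ S, fhat g S * fhat h S
      = ∑ ω : I → Bool, fhat g S * chi S ω * h ω / (Fintype.card (I → Bool) : ℝ) := by
    intro S
    rw [hh, Finset.mul_sum]
    exact Finset.sum_congr rfl fun ω _ => by ring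
  simp only [h1]
  rw [Finset.sum_comm]
  simp only [expec, Finset.sum_div]
  refine Finset.sum_congr rfl fun ω _ => ?_
  rw [← Finset.sum_div, ← Finset.sum_mul, expansion]

lemma chi_update_notMem (S : Finset I) (ω : I → Bool) (x : I) (b : Bool) (hx : x ∉ S) :
    chi S (Function.update ω x b) = chi S ω := by
  unfold chi
  refine Finset.prod_congr rfl fun i hi => ?_
  have : i ≠ x := fun h => hx (h ▸ hi)
  rw [Function.update_of_ne this _ _]

lemma chi_update_mem (S : Finset I) (ω : I → Bool) (x : I) (b : Bool) (hx : x ∈ S) :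
    chi S (Function.update ω x b) = sgn b * chi (S.erase x) ω := by
  unfold chi
  rw [← Finset.mul_prod_erase _ _ hx, Function.update_self]
  congr 1
  refine Finset.prod_congr rfl fun i hi => ?_
  rw [Function.update_of_ne (Finset.ne_of_mem_erase hi)]

lemma chi_erase (S : Finset I) (ω : I → Bool) (x : I) (hx : x ∈ S) :
    chi S ω = sgn (ω x) * chi (S.erase x) ω := by
  have := chi_update_mem S ω x (ω x) hx
  rwa [Function.update_eq_self] at this

/-- The equivalence flipping coordinate `x`. -/
noncomputable def flipE (x : I) : (I → Bool) ≃ (I → Bool) where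
  toFun ω := Function.update ω x (!ω x)
  invFun ω := Function.update ω x (!ω x)
  left_inv ω := by
    simp [Function.update_idem, Function.update_self, Function.update_eq_self]
  right_inv ω := by
    simp [Function.update_idem, Function.update_self, Function.update_eq_self]

lemma sum_flip_zero (x : I) (F : (I → Bool) → ℝ)
    (hF : ∀ ω, F (Function.update ω x (!ω x)) = -F ω) :
    ∑ ω : I → Bool, F ω = 0 := by
  have h := Equiv.sum_comp (flipE x) F
  simp only [flipE, Equiv.coe_fn_mk, hF] at h
  rw [Finset.sum_neg_distrib] at h
  linarith

/-- Merge: take coordinates in `A` from `ω`, others from `z`. -/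
noncomputable def mrg (A : Finset I) (ω z : I → Bool) : I → Bool :=
  fun i => if i ∈ A then ω i else z i

/-- The pair-swap equivalence on `(I → Bool) × (I → Bool)`. -/
noncomputable def mrgE (A : Finset I) : ((I → Bool) × (I → Bool)) ≃ ((I → Bool) × (I → Bool)) where
  toFun p := (mrg A p.1 p.2, mrg A p.2 p.1)
  invFun p := (mrg A p.1 p.2, mrg A p.2 p.1)
  left_inv p := by
    ext i <;> simp only [mrg] <;> by_cases h : i ∈ A <;> simp [h]
  right_inv p := by
    ext i <;> simp only [mrg] <;> by_cases h : i ∈ A <;> simp [h]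

lemma chi_mrg (S A : Finset I) (hSA : S ⊆ A) (ω z : I → Bool) :
    chi S (mrg A ω z) = chi S ω := by
  unfold chi
  refine Finset.prod_congr rfl fun i hi => ?_
  simp [mrg, hSA hi]

lemma fhat_condE (g : (I → Bool) → ℝ) (A S : Finset I) :
    fhat (condE g A) S = if S ⊆ A then fhat g S else 0 := by
  have hN : (Fintype.card (I → Bool) : ℝ) ≠ 0 := ne_of_gt cardN_pos
  have key : fhat (condE g A) S
      = (∑ p : (I → Bool) × (I → Bool), g (mrg A p.1 p.2) * chi S p.1)
        / (Fintype.card (I → Bool) : ℝ) ^ 2 := by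
    simp only [fhat, condE, expec, Fintype.sum_prod_type, mrg, sq, ← div_div,
      div_mul_eq_mul_div, Finset.sum_div, Finset.sum_mul]
    rfl
  rw [key]
  by_cases hS : S ⊆ A
  · rw [if_pos hS]
    have := Equiv.sum_comp (mrgE A) (fun p : (I → Bool) × (I → Bool) => g p.1 * chi S p.1)
    simp only [mrgE, Equiv.coe_fn_mk] at this
    have h2 : ∀ p : (I → Bool) × (I → Bool),
        g (mrg A p.1 p.2) * chi S (mrg A p.1 p.2) = g (mrg A p.1 p.2) * chi S p.1 := by
      intro p; rw [chi_mrg S A hS]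
    simp only [h2] at this
    rw [this, Fintype.sum_prod_type]
    simp only [Finset.sum_const, Finset.card_univ, nsmul_eq_mul]
    rw [← Finset.mul_sum, sq, mul_div_mul_left _ _ hN]
    simp [fhat, expec]
  · rw [if_neg hS]
    obtain ⟨i, hiS, hiA⟩ : ∃ i, i ∈ S ∧ i ∉ A := by
      by_contra hc; push_neg at hc; exact hS hc
    have : ∑ p : (I → Bool) × (I → Bool), g (mrg A p.1 p.2) * chi S p.1 = 0 := by
      rw [Fintype.sum_prod_type_right]
      apply Finset.sum_eq_zero; intro z _
      apply sum_flip_zero i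
      intro ω
      have hm : mrg A (Function.update ω i (!ω i)) z = mrg A ω z := by
        funext j
        simp only [mrg]
        by_cases hj : j ∈ A
        · have hji : j ≠ i := fun h => hiA (h ▸ hj)
          rw [if_pos hj, if_pos hj, Function.update_of_ne hji]
        · rw [if_neg hj, if_neg hj]
      rw [hm, chi_update_mem S ω i _ hiS, sgn_not, chi_erase S ω i hiS]
      ring
    rw [this, zero_div]

lemma piv_flip (f : (I → Bool) → ℝ) (x : I) (ω : I → Bool) :
    pivIndBit f x (Function.update ω x (!ω x)) = pivIndBit f x ω := by
  unfold pivIndBit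
  rw [Function.update_self, Bool.not_not, Function.update_idem, Function.update_eq_self]
  simp [ne_comm]

lemma piv_eq (f : (I → Bool) → ℝ) (hpm : ∀ ω, f ω = 1 ∨ f ω = -1)
    (hmono : ∀ ω ω' : I → Bool, (∀ i, ω i ≤ ω' i) → f ω ≤ f ω') (x : I) (ω : I → Bool) :
    pivIndBit f x ω = (f ω - f (Function.update ω x (!ω x))) * sgn (ω x) / 2 := by
  unfold pivIndBit
  cases hb : ω x
  · simp only [Bool.not_false]
    have hle : f ω ≤ f (Function.update ω x true) := by
      apply hmono
      intro i
      by_cases hi : i = x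
      · subst hi; rw [Function.update_self]; exact Bool.le_true _
      · rw [Function.update_of_ne hi]
    rcases hpm ω with h1 | h1 <;> rcases hpm (Function.update ω x true) with h2 | h2 <;>
      rw [h1, h2] at hle ⊢ <;> simp [sgn] <;> norm_num <;> linarith
  · simp only [Bool.not_true]
    have hle : f (Function.update ω x false) ≤ f ω := by
      apply hmono
      intro i
      by_cases hi : i = x
      · subst hi; rw [Function.update_self]; exact Bool.false_le _
      · rw [Function.update_of_ne hi]
    rcases hpm ω with h1 | h1 <;> rcases hpm (Function.update ω x false) with h2 | h2 <;>
      rw [h1, h2] at hle ⊢ <;> simp [sgn] <;> norm_num <;> linarith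

lemma fhat_piv (f : (I → Bool) → ℝ) (hpm : ∀ ω, f ω = 1 ∨ f ω = -1)
    (hmono : ∀ ω ω' : I → Bool, (∀ i, ω i ≤ ω' i) → f ω ≤ f ω') (x : I) (S : Finset I) :
    fhat (pivIndBit f x) S = if x ∈ S then 0 else fhat f (insert x S) := by
  by_cases hxS : x ∈ S
  · rw [if_pos hxS]
    have hz : ∑ ω : I → Bool, pivIndBit f x ω * chi S ω = 0 := by
      apply sum_flip_zero x
      intro ω
      rw [piv_flip, chi_update_mem S ω x _ hxS, sgn_not, chi_erase S ω x hxS]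
      ring
    simp [fhat, expec, hz]
  · rw [if_neg hxS]
    have hchi : ∀ ω : I → Bool, chi (insert x S) ω = sgn (ω x) * chi S ω := by
      intro ω; unfold chi; exact Finset.prod_insert hxS
    have hflip : ∑ ω : I → Bool, f (Function.update ω x (!ω x)) * (sgn (ω x) * chi S ω)
        = - ∑ ω : I → Bool, f ω * (sgn (ω x) * chi S ω) := by
      have h := Equiv.sum_comp (flipE x)
        (fun ω : I → Bool => f (Function.update ω x (!ω x)) * (sgn (ω x) * chi S ω))
      simp only [flipE, Equiv.coe_fn_mk] at h
      rw [← h, ← Finset.sum_neg_distrib]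
      refine Finset.sum_congr rfl fun ω _ => ?_
      simp only [Function.update_idem, Function.update_self, Bool.not_not,
        Function.update_eq_self, sgn_not, chi_update_notMem S _ x _ hxS]
      ring
    have hpe : ∀ ω : I → Bool, pivIndBit f x ω * chi S ω
        = (f ω * (sgn (ω x) * chi S ω)
            - f (Function.update ω x (!ω x)) * (sgn (ω x) * chi S ω)) / 2 := by
      intro ω; rw [piv_eq f hpm hmono]; ring
    simp only [fhat, expec, hpe, hchi]
    congr 1
    rw [← Finset.sum_div, Finset.sum_sub_distrib, hflip]
    ring

/-- For monotone `±1`-valued `f`, a bit `x` and `W ⊆ I∖{x}`, the exact identity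
`P[x ∈ 𝒮, 𝒮 ∩ W = ∅] = E[λ(x,W)²]` holds, where
`λ(x,W) = P[x is pivotal | F_{W^c}]`. -/
theorem spectral_bit_identity (f : (I → Bool) → ℝ)
    (hpm : ∀ ω, f ω = 1 ∨ f ω = -1)
    (hmono : ∀ ω ω' : I → Bool, (∀ i, ω i ≤ ω' i) → f ω ≤ f ω')
    (x : I) (W : Finset I) (hx : x ∉ W) :
    (∑ S : Finset I, if x ∈ S ∧ S ∩ W = ∅ then fhat f S ^ 2 else 0)
      = expec (fun ω => condE (pivIndBit f x) ((univ : Finset I) \ W) ω ^ 2) := by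
  --
  set A : Finset I := (univ : Finset I) \ W with hA
  have hrhs : expec (fun ω => condE (pivIndBit f x) A ω ^ 2)
      = ∑ S : Finset I, fhat (condE (pivIndBit f x) A) S * fhat (condE (pivIndBit f x) A) S := by
    rw [parseval]
    congr 1
    funext ω
    ring
  rw [hrhs]
  simp only [fhat_condE, fhat_piv f hpm hmono x]
  have hsummand : ∀ S : Finset I,
      (if S ⊆ A then (if x ∈ S then 0 else fhat f (insert x S)) else 0)
        * (if S ⊆ A then (if x ∈ S then 0 else fhat f (insert x S)) else 0)
      = if S ⊆ A ∧ x ∉ S then fhat f (insert x S) ^ 2 else 0 := by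
    intro S
    by_cases h1 : S ⊆ A <;> by_cases h2 : x ∈ S <;> simp [h1, h2] <;> ring
  simp only [hsummand]
  rw [← Finset.sum_filter, ← Finset.sum_filter]
  have hmemW : ∀ S : Finset I, S ∩ W = ∅ ↔ ∀ i ∈ S, i ∉ W := by
    intro S
    simp [Finset.eq_empty_iff_forall_notMem]
  refine Finset.sum_nbij' (fun S => S.erase x) (fun S => insert x S) ?_ ?_ ?_ ?_ ?_
  · intro S hS
    simp only [Finset.mem_filter, Finset.mem_univ, true_and] at hS ⊢
    obtain ⟨hxs, hsw⟩ := hS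
    constructor
    · intro i hi
      rw [hA, Finset.mem_sdiff]
      exact ⟨Finset.mem_univ i, (hmemW S).1 hsw i (Finset.mem_of_mem_erase hi)⟩
    · exact Finset.notMem_erase x S
  · intro S hS
    simp only [Finset.mem_filter, Finset.mem_univ, true_and] at hS ⊢
    obtain ⟨hsa, hxs⟩ := hS
    refine ⟨Finset.mem_insert_self x S, (hmemW _).2 ?_⟩
    intro i hi
    rcases Finset.mem_insert.1 hi with h | h
    · subst h; exact hx
    · have := hsa h
      rw [hA, Finset.mem_sdiff] at this
      exact this.2
  · intro S hS
    simp only [Finset.mem_filter, Finset.mem_univ, true_and] at hS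
    exact Finset.insert_erase hS.1
  · intro S hS
    simp only [Finset.mem_filter, Finset.mem_univ, true_and] at hS
    exact Finset.erase_insert hS.2
  · intro S hS
    simp only [Finset.mem_filter, Finset.mem_univ, true_and] at hS
    rw [Finset.insert_erase hS.1]
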